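/- For complex s with Re s < 1 and real τ, the product Γ(1-s+iτ) Γ(1-s-iτ) equals 2^{2s-1} Γ(2(1-s)) ∫₀^∞ cos(τ y) / cosh^{2(1-s)}(y/2) dy. -/

import Mathlib

open MeasureTheory Set Complex

lemma cpow_pos_eq {r : ℝ} (hr : 0 < r) (w : ℂ) :
    (r : ℂ) ^ w = Complex.exp ((Real.log r : ℂ) * w) := by
  rw [Complex.cpow_def_of_ne_zero (by exact_mod_cast hr.ne') w, Complex.ofReal_log hr.le]

lemma log_one_add_exp (y : ℝ) :
    Real.log (1 + Real.exp y) = y/2 + Real.log 2 + Real.log (Real.cosh (y/2)) := by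
  have h : 1 + Real.exp y = Real.exp (y/2) * (2 * Real.cosh (y/2)) := by
    rw [Real.cosh_eq]
    rw [show (2:ℝ) * ((Real.exp (y/2) + Real.exp (-(y/2)))/2) = Real.exp (y/2) + Real.exp (-(y/2)) by ring]
    rw [mul_add, ← Real.exp_add, ← Real.exp_add]
    norm_num
    ring
  rw [h, Real.log_mul (Real.exp_pos _).ne' (by positivity), Real.log_exp,
    Real.log_mul two_ne_zero (Real.cosh_pos _).ne']
  ring

lemma key_pointwise (a : ℂ) (τ y : ℝ) :
    |Real.exp y / (1 + Real.exp y)^2| •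
      ((((Real.exp y / (1 + Real.exp y) : ℝ)) : ℂ) ^ (a + τ*I - 1) *
       (1 - (((Real.exp y / (1 + Real.exp y) : ℝ)) : ℂ)) ^ (a - τ*I - 1))
    = Complex.exp ((τ:ℂ) * (y:ℂ) * I) *
        (((2:ℝ) : ℂ) ^ (-(2*a)) * ((Real.cosh (y/2) : ℝ) : ℂ) ^ (-(2*a))) := by
  have he : 0 < Real.exp y := Real.exp_pos y
  have h1e : 0 < 1 + Real.exp y := by positivity
  set e := Real.exp y with he_def
  have hx : 0 < e / (1 + e) := by positivity
  have h1xv : (1:ℝ) - e/(1+e) = (1+e)⁻¹ := by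
    field_simp
    ring
  have h1x : (1 : ℂ) - ((e/(1+e) : ℝ) : ℂ) = (((1+e)⁻¹ : ℝ) : ℂ) := by
    rw [← h1xv]; push_cast; ring
  have hphi : |e / (1+e)^2| = (e/(1+e)) * (1+e)⁻¹ := by
    rw [abs_of_pos (by positivity), sq, ← div_div, div_eq_mul_inv]
  set L1 := Real.log (e/(1+e)) with hL1
  set L2 := Real.log ((1+e)⁻¹) with hL2
  have hA : L1 - L2 = y := by
    rw [hL1, hL2, Real.log_div he.ne' h1e.ne', Real.log_inv, he_def, Real.log_exp]; ring
  have hB : L1 + L2 = -(2*Real.log 2) - 2*Real.log (Real.cosh (y/2)) := by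
    rw [hL1, hL2, Real.log_div he.ne' h1e.ne', Real.log_inv, he_def, Real.log_exp,
      log_one_add_exp y]
    ring
  have hA' : (L1:ℂ) - (L2:ℂ) = (y:ℂ) := by exact_mod_cast congrArg (Complex.ofReal) hA
  have hB' : (L1:ℂ) + (L2:ℂ) = -(2*(Real.log 2 : ℂ)) - 2*(Real.log (Real.cosh (y/2)) : ℂ) := by
    exact_mod_cast congrArg (Complex.ofReal) hB
  rw [hphi, h1x, Complex.real_smul, cpow_pos_eq hx, cpow_pos_eq (by positivity : (0:ℝ) < (1+e)⁻¹),
    cpow_pos_eq (by norm_num : (0:ℝ) < 2), cpow_pos_eq (Real.cosh_pos _)]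
  have hxexp : ((e/(1+e) : ℝ) : ℂ) = Complex.exp (L1 : ℂ) := by
    rw [hL1, ← Complex.ofReal_exp, Real.exp_log hx]
  have h1xexp : (((1+e)⁻¹ : ℝ) : ℂ) = Complex.exp (L2 : ℂ) := by
    rw [hL2, ← Complex.ofReal_exp, Real.exp_log (by positivity)]
  rw [Complex.ofReal_mul, hxexp, h1xexp]
  simp only [← Complex.exp_add]
  congr 1
  linear_combination a * hB' + ((τ:ℂ) * I) * hA'

lemma phi_hasDerivAt (y : ℝ) :
    HasDerivAt (fun y => Real.exp y / (1 + Real.exp y))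
      (Real.exp y / (1 + Real.exp y)^2) y := by
  have h1e : (0:ℝ) < 1 + Real.exp y := by positivity
  have h := (Real.hasDerivAt_exp y).div ((hasDerivAt_const y (1:ℝ)).add (Real.hasDerivAt_exp y))
    h1e.ne'
  exact h.congr_deriv (by simp only [Pi.add_apply]; ring)

lemma phi_injective : Function.Injective (fun y => Real.exp y / (1 + Real.exp y)) := by
  intro y1 y2 h
  simp only at h
  have h1 : (0:ℝ) < 1 + Real.exp y1 := by positivity
  have h2 : (0:ℝ) < 1 + Real.exp y2 := by positivity
  rw [div_eq_div_iff h1.ne' h2.ne'] at h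
  have : Real.exp y1 = Real.exp y2 := by nlinarith
  exact Real.exp_injective this

lemma phi_image : (fun y => Real.exp y / (1 + Real.exp y)) '' univ = Ioo (0:ℝ) 1 := by
  ext x
  simp only [image_univ, mem_range, mem_Ioo]
  constructor
  · rintro ⟨y, rfl⟩
    have h1e : (0:ℝ) < 1 + Real.exp y := by positivity
    constructor
    · positivity
    · rw [div_lt_one h1e]; linarith [Real.exp_pos y]
  · rintro ⟨hx0, hx1⟩
    refine ⟨Real.log (x / (1 - x)), ?_⟩
    have h1x : (0:ℝ) < 1 - x := by linarith
    rw [Real.exp_log (by positivity)]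
    field_simp
    ring


/-- for Re s < 1 and real τ,
Γ(1-s+iτ) Γ(1-s-iτ) = 2^{2s-1} Γ(2(1-s)) ∫₀^∞ cos(τ y) / cosh^{2(1-s)}(y/2) dy. -/
theorem gamma_product_eq_cosh_integral (s : ℂ) (hs : s.re < 1) (τ : ℝ) :
    Complex.Gamma (1 - s + τ * Complex.I) * Complex.Gamma (1 - s - τ * Complex.I) =
      (2:ℂ) ^ (2*s - 1) * Complex.Gamma (2*(1 - s)) *
        ∫ y in Set.Ioi (0:ℝ),
          (Real.cos (τ * y) : ℂ) / ((Real.cosh (y/2) : ℂ)) ^ (2*(1 - s)) := by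
  set a : ℂ := 1 - s with ha_def
  have ha : 0 < a.re := by
    rw [ha_def, Complex.sub_re, Complex.one_re]; linarith
  have hre : ((τ:ℂ) * I).re = 0 := by simp
  have hu : 0 < (a + (τ:ℂ) * I).re := by rw [Complex.add_re, hre, add_zero]; exact ha
  have hv : 0 < (a - (τ:ℂ) * I).re := by rw [Complex.sub_re, hre, sub_zero]; exact ha
  have key := Complex.Gamma_mul_Gamma_eq_betaIntegral hu hv
  have huv : a + (τ:ℂ) * I + (a - (τ:ℂ) * I) = 2 * a := by ring
  rw [huv] at key
  set g : ℝ → ℂ := fun x => (x:ℂ) ^ (a + (τ:ℂ)*I - 1) * (1 - (x:ℂ)) ^ (a - (τ:ℂ)*I - 1) with hg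
  have hbeta : Complex.betaIntegral (a + (τ:ℂ)*I) (a - (τ:ℂ)*I) = ∫ x in Ioo (0:ℝ) 1, g x := by
    rw [Complex.betaIntegral, intervalIntegral.integral_of_le zero_le_one,
      integral_Ioc_eq_integral_Ioo]
  set φ : ℝ → ℝ := fun y => Real.exp y / (1 + Real.exp y) with hφ
  have hderiv : ∀ y ∈ (univ : Set ℝ),
      HasDerivWithinAt φ (Real.exp y / (1 + Real.exp y)^2) univ y :=
    fun y _ => (phi_hasDerivAt y).hasDerivWithinAt
  have hinj : InjOn φ univ := phi_injective.injOn
  have hcov := integral_image_eq_integral_abs_deriv_smul MeasurableSet.univ hderiv hinj g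
  rw [show φ '' univ = Ioo (0:ℝ) 1 from phi_image, Measure.restrict_univ] at hcov
  set F : ℝ → ℂ := fun y => Complex.exp ((τ:ℂ) * (y:ℂ) * I) *
      (((2:ℝ):ℂ) ^ (-(2*a)) * ((Real.cosh (y/2) : ℝ) : ℂ) ^ (-(2*a))) with hF
  have hpt : (fun y : ℝ => |Real.exp y / (1 + Real.exp y)^2| • g (φ y)) = F := by
    funext y
    exact key_pointwise a τ y
  rw [hpt] at hcov
  -- integrability
  have hg_int : IntegrableOn g (Ioo 0 1) := by
    have h := Complex.betaIntegral_convergent hu hv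
    rw [intervalIntegrable_iff, uIoc_of_le zero_le_one] at h
    exact h.mono_set Ioo_subset_Ioc_self
  have hF_int : Integrable F := by
    have h := (integrableOn_image_iff_integrableOn_abs_deriv_smul MeasurableSet.univ hderiv hinj
      g).mp (by rwa [show φ '' univ = Ioo (0:ℝ) 1 from phi_image])
    rw [hpt] at h
    exact integrableOn_univ.mp h
  have hFneg_int : Integrable (fun y => F (-y)) := hF_int.comp_neg
  -- split into Ioi 0
  have hsplit : ∫ y, F y = ∫ y in Ioi (0:ℝ), (F y + F (-y)) := by
    rw [integral_add (hF_int.integrableOn) (hFneg_int.integrableOn),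
      integral_comp_neg_Ioi, neg_zero, ← intervalIntegral.integral_Iic_add_Ioi hF_int.integrableOn
        hF_int.integrableOn, add_comm]
  -- F y + F (-y) = 2 cos(τ y) * C
  have hcos : ∀ y : ℝ, F y + F (-y) =
      (((2:ℝ):ℂ) ^ (-(2*a)) * 2) * ((Real.cos (τ * y) : ℂ) *
        (((Real.cosh (y/2) : ℝ) : ℂ) ^ (-(2*a)))) := by
    intro y
    have hch : Real.cosh (-y/2) = Real.cosh (y/2) := by
      rw [show -y/2 = -(y/2) by ring, Real.cosh_neg]
    simp only [hF, Complex.ofReal_neg, hch]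
    rw [show (τ:ℂ) * (-(y:ℂ)) * I = (-((τ:ℂ) * (y:ℂ))) * I by ring,
      show (τ:ℂ) * (y:ℂ) * I = ((τ:ℂ) * (y:ℂ)) * I by ring,
      Complex.exp_mul_I, Complex.exp_mul_I, Complex.cos_neg, Complex.sin_neg,
      Complex.ofReal_cos, Complex.ofReal_mul, Complex.cos]
    ring_nf
  have hconst : (2:ℂ) ^ (2*s - 1) = ((2:ℝ):ℂ) ^ (-(2*a)) * 2 := by
    rw [show ((2:ℝ):ℂ) = (2:ℂ) by norm_num,
      show (2*s - 1 : ℂ) = -(2*a) + 1 by rw [ha_def]; ring,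
      Complex.cpow_add _ _ two_ne_zero, Complex.cpow_one]
  have hint : (∫ y in Ioi (0:ℝ), (Real.cos (τ * y) : ℂ) / ((Real.cosh (y/2) : ℂ)) ^ (2*a))
      = ∫ y in Ioi (0:ℝ), (Real.cos (τ * y) : ℂ) * ((Real.cosh (y/2) : ℝ) : ℂ) ^ (-(2*a)) := by
    simp_rw [Complex.cpow_neg, div_eq_mul_inv]
  rw [key, hbeta, hcov, hsplit]
  simp only [hcos]
  rw [MeasureTheory.integral_const_mul, hint, hconst]
  ring
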